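/- Let n be a positive integer and let f(t) = a_0 + a_1 t + ⋯ + a_{n+1} t^{n+1} be a polynomial with complex coefficients of degree at most n+1. Then for every complex number λ with λ ∉ {0, 1, 2, ..., n}, one has ∑_{k=0}^{n} C(n,k) (-1)^k f(k)/(k-λ) = f(λ) · ∑_{k=0}^{n} C(n,k) (-1)^k/(k-λ) + (-1)^n n! a_{n+1}. -/

import Mathlib

open Finset Nat

section
open Polynomial Function
open scoped fwdDiff

lemma fwdDiff_eval_poly (q : Polynomial ℂ) :
    Δ_[1] (fun x : ℂ => q.eval x) = fun x : ℂ => ((taylor 1 q) - q).eval x := by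
  funext x
  simp [fwdDiff, taylor_apply, Polynomial.eval_comp, add_comm]

lemma coeff_taylor_sub (n : ℕ) (q : Polynomial ℂ) (hq : q.natDegree ≤ n + 1)
    (m : ℕ) (hm : n ≤ m) :
    ((taylor 1 q) - q).coeff m = ((m : ℂ) + 1) * q.coeff (m + 1) := by
  rw [Polynomial.coeff_sub, taylor_coeff]
  have h2 : (hasseDeriv m q).natDegree < 2 := by
    have := Polynomial.natDegree_hasseDeriv_le q m
    omega
  rw [Polynomial.eval_eq_sum_range' h2]
  simp only [Finset.sum_range_succ, Finset.sum_range_one, hasseDeriv_coeff, one_pow, mul_one,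
    zero_add, Nat.choose_self, Nat.cast_one, one_mul, add_comm 1 m, Nat.choose_succ_self_right]
  push_cast
  ring

lemma taylor_sub_natDegree (n : ℕ) (q : Polynomial ℂ) (hq : q.natDegree ≤ n + 1) :
    ((taylor 1 q) - q).natDegree ≤ n := by
  rw [Polynomial.natDegree_le_iff_coeff_eq_zero]
  intro m hm
  rw [coeff_taylor_sub n q hq m hm.le,
    Polynomial.coeff_eq_zero_of_natDegree_lt (by omega), mul_zero]

lemma key (n : ℕ) : ∀ q : Polynomial ℂ, q.natDegree ≤ n →
    (Δ_[1])^[n] (fun x : ℂ => q.eval x) 0 = (n ! : ℂ) * q.coeff n := by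
  induction n with
  | zero =>
    intro q hq
    rw [Polynomial.eq_C_of_natDegree_le_zero hq]
    simp
  | succ n ih =>
    intro q hq
    rw [Function.iterate_succ_apply, fwdDiff_eval_poly,
      ih _ (taylor_sub_natDegree n q hq), coeff_taylor_sub n q hq n le_rfl,
      Nat.factorial_succ]
    push_cast
    ring

theorem melzak_deg_n_add_one (n : ℕ) (hn : 0 < n) (f : Polynomial ℂ)
    (hf : f.natDegree ≤ n + 1) (l : ℂ) (hl : ∀ k ∈ Finset.range (n + 1), l ≠ k) :
    ∑ k ∈ Finset.range (n + 1), (n.choose k : ℂ) * (-1) ^ k * f.eval (k : ℂ) / ((k : ℂ) - l) =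
      f.eval l * ∑ k ∈ Finset.range (n + 1), (n.choose k : ℂ) * (-1) ^ k / ((k : ℂ) - l) +
        (-1) ^ n * (n ! : ℂ) * f.coeff (n + 1) := by
  obtain ⟨q, hq⟩ := Polynomial.X_sub_C_dvd_sub_C_eval (a := l) (p := f)
  have hqdeg : q.natDegree ≤ n := by
    by_cases hq0 : q = 0
    · simp [hq0]
    · have h1 : ((X - C l) * q).natDegree = 1 + q.natDegree := by
        rw [Polynomial.natDegree_mul (Polynomial.X_sub_C_ne_zero l) hq0,
          Polynomial.natDegree_X_sub_C]
      have h2 : (f - C (f.eval l)).natDegree ≤ n + 1 := by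
        refine le_trans (Polynomial.natDegree_sub_le _ _) ?_
        simp [Polynomial.natDegree_C, hf]
      rw [hq, h1] at h2
      omega
  have hqc : q.coeff n = f.coeff (n + 1) := by
    have := congrArg (fun p => Polynomial.coeff p (n + 1)) hq
    simp only [Polynomial.coeff_sub, Polynomial.coeff_C, sub_mul, Polynomial.coeff_X_mul,
      Polynomial.coeff_C_mul, if_neg (Nat.succ_ne_zero n)] at this
    rw [Polynomial.coeff_eq_zero_of_natDegree_lt (lt_of_le_of_lt hqdeg (Nat.lt_succ_self n)),
      mul_zero, sub_zero, sub_zero] at this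
    exact this.symm
  have heval : ∀ x : ℂ, f.eval x - f.eval l = (x - l) * q.eval x := by
    intro x
    have := congrArg (Polynomial.eval x) hq
    simpa using this
  have hsum : ∑ k ∈ Finset.range (n + 1),
      ((n.choose k : ℂ) * (-1) ^ k * f.eval (k : ℂ) / ((k : ℂ) - l)
        - f.eval l * ((n.choose k : ℂ) * (-1) ^ k / ((k : ℂ) - l)))
      = ∑ k ∈ Finset.range (n + 1), (n.choose k : ℂ) * (-1) ^ k * q.eval (k : ℂ) := by
    refine Finset.sum_congr rfl fun k hk => ?_
    have hkl : (k : ℂ) - l ≠ 0 := sub_ne_zero.mpr (fun h => hl k hk h.symm)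
    field_simp
    linear_combination (n.choose k : ℂ) * heval (k : ℂ)
  have hfd := fwdDiff_iter_eq_sum_shift (1 : ℂ) (fun x : ℂ => q.eval x) n 0
  rw [key n q hqdeg] at hfd
  have hq2 : ∑ k ∈ Finset.range (n + 1), (n.choose k : ℂ) * (-1) ^ k * q.eval (k : ℂ)
      = (-1) ^ n * (n ! : ℂ) * q.coeff n := by
    rw [mul_assoc, hfd, Finset.mul_sum]
    refine Finset.sum_congr rfl fun k hk => ?_
    have hk' : k ≤ n := Nat.lt_succ_iff.mp (Finset.mem_range.mp hk)
    have hsign : ((-1 : ℂ)) ^ k = (-1) ^ n * (-1) ^ (n - k) := by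
      rw [← pow_add]
      have h3 : n + (n - k) = 2 * (n - k) + k := by omega
      rw [h3, pow_add, pow_mul]
      norm_num
    simp only [zsmul_eq_mul, smul_eq_mul, nsmul_eq_mul, mul_one, zero_add]
    push_cast
    rw [hsign]
    ring
  rw [← sub_eq_iff_eq_add', Finset.mul_sum, ← Finset.sum_sub_distrib, hsum, hq2, hqc]

end
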